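/- arXiv:2110.03202 — 2 statements merged into one kernel-verified Lean document; each statement's English description precedes it below -/
import Mathlib

section
/- There exists a constant C > 0 such that for all Q ≥ 2 and all K ≥ 1: Σ_{1 ≤ |ℓ| ≤ K} ( Σ_{d | ℓ, d ≤ Q} Q/d )^2 ≤ C·( K·Q^2·(Σ_{d₁,d₂ ≤ Q} gcd(d₁,d₂)/(d₁² d₂²)) + K·Q^2·log Q ), and moreover Σ_{d₁,d₂ ≥ 1} gcd(d₁,d₂)/(d₁² d₂²) converges. -/
open Finset

/-- The positive-part sum bound. -/
lemma aux_pos_sum (Q K : ℕ) (hQ : 2 ≤ Q) (hK : 1 ≤ K) :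
    ∑ n ∈ Finset.Icc 1 K,
        (∑ d ∈ (Nat.divisors n).filter (fun d => d ≤ Q), (Q : ℝ) / d) ^ 2 ≤
      (K : ℝ) * Q ^ 2 *
        (∑ d₁ ∈ Finset.Icc 1 Q, ∑ d₂ ∈ Finset.Icc 1 Q,
          (Nat.gcd d₁ d₂ : ℝ) / ((d₁ : ℝ) ^ 2 * (d₂ : ℝ) ^ 2)) := by
  -- rewrite divisor sums as sums over Icc 1 Q with indicator
  have hdiv : ∀ n ∈ Finset.Icc 1 K,
      (∑ d ∈ (Nat.divisors n).filter (fun d => d ≤ Q), (Q : ℝ) / d) ^ 2 =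
      ∑ d₁ ∈ Finset.Icc 1 Q, ∑ d₂ ∈ Finset.Icc 1 Q,
        (if Nat.lcm d₁ d₂ ∣ n then ((Q : ℝ) / d₁) * ((Q : ℝ) / d₂) else 0) := by
    intro n hn
    simp only [Finset.mem_Icc] at hn
    have hset : (Nat.divisors n).filter (fun d => d ≤ Q) =
        (Finset.Icc 1 Q).filter (fun d => d ∣ n) := by
      ext d
      simp only [Finset.mem_filter, Nat.mem_divisors, Finset.mem_Icc]
      constructor
      · rintro ⟨⟨hd, hn0⟩, hdQ⟩
        exact ⟨⟨Nat.pos_of_dvd_of_pos hd (by omega), hdQ⟩, hd⟩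
      · rintro ⟨⟨h1, h2⟩, hd⟩
        exact ⟨⟨hd, by omega⟩, h2⟩
    rw [hset, Finset.sum_filter, sq, Finset.sum_mul_sum]
    refine Finset.sum_congr rfl fun d₁ _ => Finset.sum_congr rfl fun d₂ _ => ?_
    by_cases h1 : d₁ ∣ n <;> by_cases h2 : d₂ ∣ n <;>
      simp [h1, h2, Nat.lcm_dvd_iff]
  rw [Finset.sum_congr rfl hdiv, Finset.sum_comm]
  have hswap : ∀ d₁ ∈ Finset.Icc 1 Q,
      (∑ n ∈ Finset.Icc 1 K, ∑ d₂ ∈ Finset.Icc 1 Q,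
        (if Nat.lcm d₁ d₂ ∣ n then ((Q : ℝ) / d₁) * ((Q : ℝ) / d₂) else 0)) =
      ∑ d₂ ∈ Finset.Icc 1 Q, ∑ n ∈ Finset.Icc 1 K,
        (if Nat.lcm d₁ d₂ ∣ n then ((Q : ℝ) / d₁) * ((Q : ℝ) / d₂) else 0) := by
    intro d₁ _
    exact Finset.sum_comm
  rw [Finset.sum_congr rfl hswap, Finset.mul_sum]
  refine Finset.sum_le_sum fun d₁ hd₁ => ?_
  rw [Finset.mul_sum]
  refine Finset.sum_le_sum fun d₂ hd₂ => ?_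
  simp only [Finset.mem_Icc] at hd₁ hd₂
  set l := Nat.lcm d₁ d₂ with hl
  have hinner : (∑ n ∈ Finset.Icc 1 K,
      (if l ∣ n then ((Q : ℝ) / d₁) * ((Q : ℝ) / d₂) else 0)) =
      ((K / l : ℕ) : ℝ) * (((Q : ℝ) / d₁) * ((Q : ℝ) / d₂)) := by
    rw [← Finset.sum_filter]
    rw [Finset.sum_const, nsmul_eq_mul]
    congr 1
    have : Finset.Icc 1 K = Finset.Ioc 0 K := by
      rw [← Finset.Icc_add_one_left_eq_Ioc]; rfl
    rw [this]
    exact_mod_cast congrArg (Nat.cast (R := ℝ)) (Nat.Ioc_filter_dvd_card_eq_div K l)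
  rw [hinner]
  have hd₁pos : (0 : ℝ) < d₁ := by exact_mod_cast hd₁.1
  have hd₂pos : (0 : ℝ) < d₂ := by exact_mod_cast hd₂.1
  have hlpos : 0 < l := Nat.pos_of_ne_zero (Nat.lcm_ne_zero (by omega) (by omega))
  have hgl : (Nat.gcd d₁ d₂ : ℝ) * (l : ℝ) = (d₁ : ℝ) * d₂ := by
    exact_mod_cast congrArg (Nat.cast (R := ℝ)) (Nat.gcd_mul_lcm d₁ d₂)
  have hcast : ((K / l : ℕ) : ℝ) ≤ (K : ℝ) / l := Nat.cast_div_le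
  have hQpos : (0 : ℝ) < Q := by positivity
  have hmulpos : 0 ≤ ((Q : ℝ) / d₁) * ((Q : ℝ) / d₂) := by positivity
  calc ((K / l : ℕ) : ℝ) * (((Q : ℝ) / d₁) * ((Q : ℝ) / d₂))
      ≤ ((K : ℝ) / l) * (((Q : ℝ) / d₁) * ((Q : ℝ) / d₂)) := by
        exact mul_le_mul_of_nonneg_right hcast hmulpos
    _ = (K : ℝ) * (Q : ℝ) ^ 2 * ((Nat.gcd d₁ d₂ : ℝ) / ((d₁ : ℝ) ^ 2 * (d₂ : ℝ) ^ 2)) := by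
        have hlR : (0 : ℝ) < l := by exact_mod_cast hlpos
        field_simp
        linear_combination -1 * hgl

theorem stmt_6 :
    (∃ C > 0, ∀ Q K : ℕ, 2 ≤ Q → 1 ≤ K →
      ∑ ℓ ∈ (Finset.Icc (-(K : ℤ)) (K : ℤ)).filter (fun ℓ => ℓ ≠ 0),
          (∑ d ∈ (Nat.divisors ℓ.natAbs).filter (fun d => d ≤ Q), (Q : ℝ) / d) ^ 2 ≤
        C * ((K : ℝ) * Q ^ 2 *
              (∑ d₁ ∈ Finset.Icc 1 Q, ∑ d₂ ∈ Finset.Icc 1 Q,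
                (Nat.gcd d₁ d₂ : ℝ) / ((d₁ : ℝ) ^ 2 * (d₂ : ℝ) ^ 2)) +
            (K : ℝ) * Q ^ 2 * Real.log Q)) ∧
    Summable (fun p : ℕ × ℕ =>
      (Nat.gcd (p.1 + 1) (p.2 + 1) : ℝ) / (((p.1 : ℝ) + 1) ^ 2 * ((p.2 : ℝ) + 1) ^ 2)) := by
  constructor
  · refine ⟨2, by norm_num, fun Q K hQ hK => ?_⟩
    set S := ∑ d₁ ∈ Finset.Icc 1 Q, ∑ d₂ ∈ Finset.Icc 1 Q,
        (Nat.gcd d₁ d₂ : ℝ) / ((d₁ : ℝ) ^ 2 * (d₂ : ℝ) ^ 2) with hS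
    -- split the symmetric sum
    have hsplit : (Finset.Icc (-(K : ℤ)) (K : ℤ)).filter (fun ℓ => ℓ ≠ 0) =
        ((Finset.Icc 1 K).image (fun n : ℕ => (n : ℤ))) ∪
        ((Finset.Icc 1 K).image (fun n : ℕ => -(n : ℤ))) := by
      ext ℓ
      simp only [Finset.mem_filter, Finset.mem_Icc, Finset.mem_union, Finset.mem_image]
      constructor
      · rintro ⟨⟨h1, h2⟩, h3⟩
        rcases lt_or_gt_of_ne h3 with h | h
        · exact Or.inr ⟨ℓ.natAbs, by omega, by omega⟩
        · exact Or.inl ⟨ℓ.natAbs, by omega, by omega⟩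
      · rintro (⟨n, ⟨hn1, hn2⟩, rfl⟩ | ⟨n, ⟨hn1, hn2⟩, rfl⟩) <;>
          constructor <;> omega
    have hdisj : Disjoint ((Finset.Icc 1 K).image (fun n : ℕ => (n : ℤ)))
        ((Finset.Icc 1 K).image (fun n : ℕ => -(n : ℤ))) := by
      rw [Finset.disjoint_left]
      rintro a ha hb
      simp only [Finset.mem_image, Finset.mem_Icc] at ha hb
      obtain ⟨n, hn, rfl⟩ := ha
      obtain ⟨m, hm, hnm⟩ := hb
      omega
    set f : ℤ → ℝ := fun ℓ =>
      (∑ d ∈ (Nat.divisors ℓ.natAbs).filter (fun d => d ≤ Q), (Q : ℝ) / d) ^ 2 with hf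
    have hpos : ∑ ℓ ∈ (Finset.Icc 1 K).image (fun n : ℕ => (n : ℤ)), f ℓ =
        ∑ n ∈ Finset.Icc 1 K, (∑ d ∈ (Nat.divisors n).filter (fun d => d ≤ Q), (Q : ℝ) / d) ^ 2 := by
      rw [Finset.sum_image (by intro a _ b _ h; have h' : (a : ℤ) = b := h; exact_mod_cast h')]
      refine Finset.sum_congr rfl fun n _ => ?_
      simp [hf]
    have hneg : ∑ ℓ ∈ (Finset.Icc 1 K).image (fun n : ℕ => -(n : ℤ)), f ℓ =
        ∑ n ∈ Finset.Icc 1 K, (∑ d ∈ (Nat.divisors n).filter (fun d => d ≤ Q), (Q : ℝ) / d) ^ 2 := by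
      rw [Finset.sum_image (by intro a _ b _ h; have h' : -(a : ℤ) = -(b : ℤ) := h; omega)]
      refine Finset.sum_congr rfl fun n _ => ?_
      simp [hf]
    rw [hsplit, Finset.sum_union hdisj, hpos, hneg, ← two_mul]
    have hbound := aux_pos_sum Q K hQ hK
    have hlog : 0 ≤ Real.log Q := Real.log_nonneg (by exact_mod_cast Nat.one_le_of_lt hQ)
    have hKQ : (0 : ℝ) ≤ (K : ℝ) * Q ^ 2 := by positivity
    nlinarith [mul_nonneg hKQ hlog]
  · -- summability
    have hsum : Summable (fun n : ℕ => (((n : ℝ) + 1) ^ ((3 : ℝ) / 2))⁻¹) := by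
      have h : Summable (fun n : ℕ => (((n : ℝ)) ^ ((3 : ℝ) / 2))⁻¹) :=
        Real.summable_nat_rpow_inv.mpr (by norm_num)
      have := (summable_nat_add_iff 1).mpr h
      refine this.congr fun n => ?_
      push_cast
      ring_nf
    refine Summable.of_nonneg_of_le (fun p => by positivity)
      (fun p => ?_) (hsum.mul_of_nonneg hsum (fun n => by positivity) (fun n => by positivity))
    obtain ⟨a, b⟩ := p
    simp only
    set x : ℝ := (a : ℝ) + 1 with hx
    set y : ℝ := (b : ℝ) + 1 with hy
    have hx1 : (1 : ℝ) ≤ x := by simp [hx]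
    have hy1 : (1 : ℝ) ≤ y := by simp [hy]
    have hxpos : (0 : ℝ) < x := by linarith
    have hypos : (0 : ℝ) < y := by linarith
    have hg1 : (Nat.gcd (a + 1) (b + 1) : ℝ) ≤ x := by
      rw [hx]; exact_mod_cast Nat.le_of_dvd (by omega) (Nat.gcd_dvd_left _ _) |>.trans_eq (by push_cast; ring)
    have hg2 : (Nat.gcd (a + 1) (b + 1) : ℝ) ≤ y := by
      rw [hy]; exact_mod_cast Nat.le_of_dvd (by omega) (Nat.gcd_dvd_right _ _) |>.trans_eq (by push_cast; ring)
    have hgpos : (0 : ℝ) ≤ (Nat.gcd (a + 1) (b + 1) : ℝ) := by positivity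
    have hgsq : (Nat.gcd (a + 1) (b + 1) : ℝ) ≤ Real.sqrt x * Real.sqrt y := by
      rw [← Real.sqrt_mul_self hgpos, ← Real.sqrt_mul hxpos.le]
      exact Real.sqrt_le_sqrt (by nlinarith)
    -- goal: gcd / (x^2 * y^2) ≤ (x^(3/2))⁻¹ * (y^(3/2))⁻¹
    have hxr : x ^ ((3 : ℝ) / 2) = x ^ 2 / Real.sqrt x := by
      rw [Real.sqrt_eq_rpow, ← Real.rpow_natCast x 2, ← Real.rpow_sub hxpos]
      norm_num
    have hyr : y ^ ((3 : ℝ) / 2) = y ^ 2 / Real.sqrt y := by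
      rw [Real.sqrt_eq_rpow, ← Real.rpow_natCast y 2, ← Real.rpow_sub hypos]
      norm_num
    rw [hxr, hyr]
    have hsx : 0 < Real.sqrt x := Real.sqrt_pos.mpr hxpos
    have hsy : 0 < Real.sqrt y := Real.sqrt_pos.mpr hypos
    rw [div_le_iff₀ (by positivity)]
    have h1 : (x ^ 2 / Real.sqrt x)⁻¹ * (y ^ 2 / Real.sqrt y)⁻¹ * (x ^ 2 * y ^ 2) =
        Real.sqrt x * Real.sqrt y := by
      field_simp
      try ring
    rw [h1]
    exact hgsq
end

section
/- Let a: ℕ → ℂ be supported on {1, …, Y} with |a(n)| ≤ n^{1/10} for all n, let s be real with 0 < s < 2, and let q ≥ Y^{10} be a positive integer. Then (1/φ(q))·Σ_{0 ≤ a' < q, gcd(a',q)=1} |Y^{−1/2} Σ_{n ≤ Y} a(n) e(a'n/q)|^s = ∫₀¹ |Y^{−1/2} Σ_{n ≤ Y} a(n) e(nα)|^s dα + O(Y^{−s}), with an absolute implied constant (depending only on s). -/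
open MeasureTheory Finset ArithmeticFunction
open scoped ArithmeticFunction.Moebius

lemma cos_lip (x y : ℝ) : |Real.cos x - Real.cos y| ≤ |x - y| := by
  rw [Real.cos_sub_cos, abs_mul, abs_mul]
  have h1 : |Real.sin ((x + y) / 2)| ≤ 1 := abs_le.2 ⟨Real.neg_one_le_sin _, Real.sin_le_one _⟩
  have h2 : |Real.sin ((x - y) / 2)| ≤ |(x - y) / 2| := Real.abs_sin_le_abs
  calc |(-2 : ℝ)| * |Real.sin ((x+y)/2)| * |Real.sin ((x-y)/2)|
      ≤ |(-2 : ℝ)| * 1 * |(x-y)/2| := by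
        apply mul_le_mul (mul_le_mul le_rfl h1 (abs_nonneg _) (abs_nonneg _)) h2 (abs_nonneg _)
        positivity
    _ = |x - y| := by rw [abs_neg, abs_two, abs_div, abs_two]; ring

lemma sin_lip (x y : ℝ) : |Real.sin x - Real.sin y| ≤ |x - y| := by
  rw [Real.sin_sub_sin, abs_mul, abs_mul]
  have h1 : |Real.cos ((x + y) / 2)| ≤ 1 := abs_le.2 ⟨Real.neg_one_le_cos _, Real.cos_le_one _⟩
  have h2 : |Real.sin ((x - y) / 2)| ≤ |(x - y) / 2| := Real.abs_sin_le_abs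
  calc |(2 : ℝ)| * |Real.sin ((x-y)/2)| * |Real.cos ((x+y)/2)|
      ≤ |(2 : ℝ)| * |(x-y)/2| * 1 := by
        apply mul_le_mul (mul_le_mul le_rfl h2 (abs_nonneg _) (abs_nonneg _)) h1 (abs_nonneg _)
        positivity
    _ = |x - y| := by rw [abs_two, abs_div, abs_two]; ring

lemma expI_lip (x y : ℝ) :
    ‖Complex.exp ((x : ℂ) * Complex.I) - Complex.exp ((y : ℂ) * Complex.I)‖ ≤
      2 * |x - y| := by
  rw [Complex.exp_mul_I, Complex.exp_mul_I, ← Complex.ofReal_cos, ← Complex.ofReal_sin,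
    ← Complex.ofReal_cos, ← Complex.ofReal_sin]
  have h1 : (Real.cos x : ℂ) + (Real.sin x : ℂ) * Complex.I -
      ((Real.cos y : ℂ) + (Real.sin y : ℂ) * Complex.I)
      = ((Real.cos x - Real.cos y : ℝ) : ℂ) + ((Real.sin x - Real.sin y : ℝ) : ℂ) * Complex.I := by
    push_cast; ring
  rw [h1]
  calc ‖((Real.cos x - Real.cos y : ℝ) : ℂ)
        + ((Real.sin x - Real.sin y : ℝ) : ℂ) * Complex.I‖
      ≤ ‖((Real.cos x - Real.cos y : ℝ) : ℂ)‖
        + ‖((Real.sin x - Real.sin y : ℝ) : ℂ) * Complex.I‖ := norm_add_le _ _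
    _ = |Real.cos x - Real.cos y| + |Real.sin x - Real.sin y| := by
        rw [norm_mul, Complex.norm_I, mul_one, Complex.norm_real, Complex.norm_real, Real.norm_eq_abs, Real.norm_eq_abs]
    _ ≤ |x - y| + |x - y| := add_le_add (cos_lip x y) (sin_lip x y)
    _ = 2 * |x - y| := by ring

lemma rpow_sub_le {u : ℝ} (hu0 : 0 < u) (hu1 : u ≤ 1) {A B : ℝ} (hB : 0 ≤ B) (hBA : B ≤ A) :
    A ^ u - B ^ u ≤ (A - B) ^ u := by
  have hA : 0 ≤ A := hB.trans hBA
  have key := NNReal.rpow_add_le_add_rpow (B.toNNReal) ((A - B).toNNReal) hu0.le hu1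
  have hAB : B.toNNReal + (A - B).toNNReal = A.toNNReal := by
    ext; simp [Real.coe_toNNReal, hB, hA, sub_nonneg.2 hBA]
  rw [hAB] at key
  have key' : (A.toNNReal : ℝ) ^ u ≤ (B.toNNReal : ℝ) ^ u + ((A - B).toNNReal : ℝ) ^ u := by
    rw [← NNReal.coe_rpow, ← NNReal.coe_rpow, ← NNReal.coe_rpow, ← NNReal.coe_add]
    exact_mod_cast key
  rw [Real.coe_toNNReal _ hA, Real.coe_toNNReal _ hB,
    Real.coe_toNNReal _ (sub_nonneg.2 hBA)] at key'
  linarith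

lemma abs_rpow_sub_rpow {u : ℝ} (hu0 : 0 < u) (hu1 : u ≤ 1) {A B : ℝ} (hA : 0 ≤ A) (hB : 0 ≤ B) :
    |A ^ u - B ^ u| ≤ |A - B| ^ u := by
  rcases le_total B A with h | h
  · rw [abs_of_nonneg (sub_nonneg.2 (Real.rpow_le_rpow hB h hu0.le)),
      abs_of_nonneg (sub_nonneg.2 h)]
    exact rpow_sub_le hu0 hu1 hB h
  · rw [abs_of_nonpos (sub_nonpos.2 (Real.rpow_le_rpow hA h hu0.le)),
      abs_of_nonpos (sub_nonpos.2 h), neg_sub, ← neg_sub B A, neg_neg]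
    exact rpow_sub_le hu0 hu1 hA h

lemma abs_rpow2_sub_rpow2 {u : ℝ} (hu0 : 0 < u) (hu1 : u ≤ 1) {A B M : ℝ} (hA : 0 ≤ A)
    (hB : 0 ≤ B) (hAM : A ≤ M) (hBM : B ≤ M) :
    |A ^ (2 * u) - B ^ (2 * u)| ≤ 2 * M ^ u * |A - B| ^ u := by
  have hM : 0 ≤ M := hA.trans hAM
  have h2u : 2 * u = u + u := by ring
  have hAu : A ^ (2 * u) = A ^ u * A ^ u := by
    rw [h2u, Real.rpow_add' hA (by positivity)]
  have hBu : B ^ (2 * u) = B ^ u * B ^ u := by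
    rw [h2u, Real.rpow_add' hB (by positivity)]
  have key : A ^ (2*u) - B ^ (2*u) = (A ^ u - B ^ u) * (A ^ u + B ^ u) := by
    rw [hAu, hBu]; ring
  rw [key, abs_mul]
  have h1 : |A ^ u - B ^ u| ≤ |A - B| ^ u := abs_rpow_sub_rpow hu0 hu1 hA hB
  have h2 : |A ^ u + B ^ u| ≤ 2 * M ^ u := by
    rw [abs_of_nonneg (by positivity)]
    have := Real.rpow_le_rpow hA hAM hu0.le
    have := Real.rpow_le_rpow hB hBM hu0.le
    linarith
  calc |A ^ u - B ^ u| * |A ^ u + B ^ u| ≤ |A - B| ^ u * (2 * M ^ u) :=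
        mul_le_mul h1 h2 (abs_nonneg _) (by positivity)
    _ = 2 * M ^ u * |A - B| ^ u := by ring

lemma card_factorial_le_prod : ∀ (n : ℕ) (S : Finset ℕ), S.card = n → (∀ p ∈ S, 2 ≤ p) →
    Nat.factorial n ≤ ∏ p ∈ S, p := by
  intro n
  induction n with
  | zero =>
    intro S h _
    rw [Finset.card_eq_zero.mp h]
    simp [Nat.factorial]
  | succ n ih =>
    intro S hcard h2
    have hne : S.Nonempty := by
      rw [← Finset.card_pos, hcard]; exact Nat.succ_pos n
    set M := S.max' hne with hM
    have hMem : M ∈ S := S.max'_mem hne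
    have hsub : S ⊆ Finset.Icc 2 M := by
      intro p hp
      exact Finset.mem_Icc.2 ⟨h2 p hp, S.le_max' p hp⟩
    have hcard2 : S.card ≤ M - 1 := by
      calc S.card ≤ (Finset.Icc 2 M).card := Finset.card_le_card hsub
        _ = M - 1 := by rw [Nat.card_Icc]; omega
    have hMn : n + 1 ≤ M := by omega
    have herase : (S.erase M).card = n := by rw [Finset.card_erase_of_mem hMem, hcard]; omega
    have hprod : ∏ p ∈ S, p = M * ∏ p ∈ S.erase M, p := (Finset.mul_prod_erase S _ hMem).symm
    rw [hprod, Nat.factorial_succ]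
    exact Nat.mul_le_mul hMn (ih _ herase (fun p hp => h2 p (Finset.mem_of_mem_erase hp)))

lemma omega_factorial_le {q : ℕ} (hq : q ≠ 0) : Nat.factorial q.primeFactors.card ≤ q := by
  calc Nat.factorial q.primeFactors.card ≤ ∏ p ∈ q.primeFactors, p :=
        card_factorial_le_prod _ _ rfl (fun p hp => (Nat.prime_of_mem_primeFactors hp).two_le)
    _ ≤ q := Nat.le_of_dvd (Nat.pos_of_ne_zero hq) (Nat.prod_primeFactors_dvd q)

lemma le_pow_omega_mul_totient {q : ℕ} (hq : q ≠ 0) :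
    q ≤ 2 ^ q.primeFactors.card * q.totient := by
  have key := Nat.totient_mul_prod_primeFactors q
  have h1 : ∏ p ∈ q.primeFactors, p ≤ 2 ^ q.primeFactors.card * ∏ p ∈ q.primeFactors, (p - 1) := by
    rw [← Finset.prod_const, ← Finset.prod_mul_distrib]
    apply Finset.prod_le_prod' -- nat version?
    intro p hp
    have := (Nat.prime_of_mem_primeFactors hp).two_le
    omega
  have hpos : 0 < ∏ p ∈ q.primeFactors, (p - 1) := by
    apply Finset.prod_pos
    intro p hp
    have := (Nat.prime_of_mem_primeFactors hp).two_le
    omega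
  have h2 : q * ∏ p ∈ q.primeFactors, (p - 1)
      ≤ (2 ^ q.primeFactors.card * q.totient) * ∏ p ∈ q.primeFactors, (p - 1) := by
    calc q * ∏ p ∈ q.primeFactors, (p - 1) = q.totient * ∏ p ∈ q.primeFactors, p := key.symm
      _ ≤ q.totient * (2 ^ q.primeFactors.card * ∏ p ∈ q.primeFactors, (p - 1)) :=
          Nat.mul_le_mul_left _ h1
      _ = (2 ^ q.primeFactors.card * q.totient) * ∏ p ∈ q.primeFactors, (p - 1) := by ring
  exact Nat.le_of_mul_le_mul_right h2 hpos

lemma sum_abs_moebius_le {q : ℕ} (hq : q ≠ 0) :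
    ∑ d ∈ q.divisors, |(μ d : ℝ)| ≤ 2 ^ q.primeFactors.card := by
  have h1 : ∑ d ∈ q.divisors, |(μ d : ℝ)|
      = ∑ d ∈ q.divisors.filter Squarefree, |(μ d : ℝ)| := by
    rw [Finset.sum_filter_of_ne]
    intro d _ hne
    by_contra hsq
    exact hne (by rw [moebius_eq_zero_of_not_squarefree hsq]; simp)
  rw [h1]
  have h2 : ∑ d ∈ q.divisors.filter Squarefree, |(μ d : ℝ)|
      ≤ ∑ _d ∈ q.divisors.filter Squarefree, (1 : ℝ) := by
    apply Finset.sum_le_sum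
    intro d hd
    rcases Finset.mem_filter.mp hd with ⟨_, hsq⟩
    rw [moebius_apply_of_squarefree hsq]
    simp [abs_pow]
  have h3 : (q.divisors.filter Squarefree).card ≤ 2 ^ q.primeFactors.card := by
    calc (q.divisors.filter Squarefree).card ≤ q.primeFactors.powerset.card := by
          apply Finset.card_le_card_of_injOn (fun d => d.primeFactors)
          · intro d hd
            rcases Finset.mem_filter.mp hd with ⟨hdvd, _⟩
            rcases Nat.mem_divisors.mp hdvd with ⟨hdq, _⟩
            exact Finset.mem_powerset.2 (Nat.primeFactors_mono hdq hq)
          · intro d1 h1' d2 h2' heq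
            rcases Finset.mem_filter.mp h1' with ⟨_, hsq1⟩
            rcases Finset.mem_filter.mp h2' with ⟨_, hsq2⟩
            rw [← Nat.prod_primeFactors_of_squarefree hsq1,
              ← Nat.prod_primeFactors_of_squarefree hsq2]
            exact Finset.prod_congr heq (fun _ _ => rfl)
      _ = 2 ^ q.primeFactors.card := by rw [Finset.card_powerset]
  refine h2.trans ?_
  rw [Finset.sum_const, nsmul_eq_mul, mul_one]
  calc ((q.divisors.filter Squarefree).card : ℝ) ≤ ((2 ^ q.primeFactors.card : ℕ) : ℝ) := by
        exact_mod_cast h3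
    _ = 2 ^ q.primeFactors.card := by push_cast; ring

lemma sum_divisors_moebius_eq (n : ℕ) :
    ∑ d ∈ n.divisors, (μ d : ℝ) = if n = 1 then 1 else 0 := by
  have key := congrArg (fun f : ArithmeticFunction ℤ => f n) moebius_mul_coe_zeta
  simp only [coe_mul_zeta_apply, one_apply] at key
  have : ((∑ d ∈ n.divisors, μ d : ℤ) : ℝ) = ((if n = 1 then (1:ℤ) else 0) : ℝ) := by
    exact_mod_cast congrArg (fun z : ℤ => (z : ℝ)) key
  push_cast at this
  convert this using 2 <;> simp

lemma moebius_decomp (q : ℕ) (hq : 0 < q) (g : ℕ → ℝ) :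
    ∑ a' ∈ (range q).filter (fun a' => Nat.Coprime a' q), g a'
      = ∑ d ∈ q.divisors, (μ d : ℝ) * ∑ b ∈ range (q / d), g (d * b) := by
  have step1 : ∑ a' ∈ (range q).filter (fun a' => Nat.Coprime a' q), g a'
      = ∑ a' ∈ range q, (∑ d ∈ (Nat.gcd a' q).divisors, (μ d : ℝ)) * g a' := by
    rw [Finset.sum_filter]
    apply Finset.sum_congr rfl
    intro a' _
    rw [sum_divisors_moebius_eq]
    by_cases h : Nat.Coprime a' q <;> simp [h, Nat.Coprime] at * <;> simp [h]
  have step2 : ∀ a' ∈ range q, (Nat.gcd a' q).divisors = q.divisors.filter (· ∣ a') := by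
    intro a' _
    ext d
    simp only [Nat.mem_divisors, Finset.mem_filter, Nat.dvd_gcd_iff]
    constructor
    · rintro ⟨⟨hd1, hd2⟩, _⟩
      exact ⟨⟨hd2, hq.ne'⟩, hd1⟩
    · rintro ⟨⟨hd2, _⟩, hd1⟩
      refine ⟨⟨hd1, hd2⟩, ?_⟩
      simp [Nat.gcd_eq_zero_iff, hq.ne']
  have step3 : ∑ a' ∈ range q, (∑ d ∈ (Nat.gcd a' q).divisors, (μ d : ℝ)) * g a'
      = ∑ d ∈ q.divisors, (μ d : ℝ) * ∑ a' ∈ (range q).filter (d ∣ ·), g a' := by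
    calc ∑ a' ∈ range q, (∑ d ∈ (Nat.gcd a' q).divisors, (μ d : ℝ)) * g a'
        = ∑ a' ∈ range q, ∑ d ∈ q.divisors.filter (· ∣ a'), (μ d : ℝ) * g a' := by
          apply Finset.sum_congr rfl
          intro a' ha'
          rw [step2 a' ha', Finset.sum_mul]
      _ = ∑ d ∈ q.divisors, ∑ a' ∈ (range q).filter (d ∣ ·), (μ d : ℝ) * g a' := by
          apply Finset.sum_comm'
          intro d a'
          simp only [Finset.mem_filter]
          tauto
      _ = ∑ d ∈ q.divisors, (μ d : ℝ) * ∑ a' ∈ (range q).filter (d ∣ ·), g a' := by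
          apply Finset.sum_congr rfl
          intro d _
          rw [Finset.mul_sum]
  rw [step1, step3]
  apply Finset.sum_congr rfl
  intro d hd
  rcases Nat.mem_divisors.mp hd with ⟨hdq, _⟩
  have hd0 : 0 < d := Nat.pos_of_dvd_of_pos hdq hq
  congr 1
  apply Finset.sum_nbij' (fun a' => a' / d) (fun b => d * b)
  · intro a' ha'
    rcases Finset.mem_filter.mp ha' with ⟨hmem, hdvd⟩
    rw [Finset.mem_range] at hmem ⊢
    exact Nat.div_lt_div_of_lt_of_dvd hdq hmem
  · intro b hb
    rw [Finset.mem_range] at hb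
    refine Finset.mem_filter.2 ⟨Finset.mem_range.2 ?_, Dvd.intro b rfl⟩
    calc d * b < d * (q / d) := (Nat.mul_lt_mul_left hd0).2 hb
      _ ≤ q := Nat.mul_div_le q d
  · intro a' ha'
    rcases Finset.mem_filter.mp ha' with ⟨_, hdvd⟩
    exact (Nat.mul_div_cancel' hdvd)
  · intro b _
    exact Nat.mul_div_cancel_left b hd0
  · intro a' ha'
    rcases Finset.mem_filter.mp ha' with ⟨_, hdvd⟩
    rw [Nat.mul_div_cancel' hdvd]

lemma riemann_sum_bound {f : ℝ → ℝ} (hf : Continuous f) {K e : ℝ} (hK : 0 ≤ K) (he0 : 0 < e)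
    (he1 : e ≤ 1) (hlip : ∀ x y : ℝ, |f x - f y| ≤ K * |x - y| ^ e) (m : ℕ) (hm : 1 ≤ m) :
    |(∑ b ∈ Finset.range m, f (b / m)) - m * ∫ α in Set.Icc (0:ℝ) 1, f α|
      ≤ K * (m : ℝ) ^ (1 - e) := by
  have hm0 : (0:ℝ) < m := by exact_mod_cast hm
  have hInt : ∀ a b : ℝ, IntervalIntegrable f volume a b := fun a b => hf.intervalIntegrable a b
  have h0 : (∫ α in Set.Icc (0:ℝ) 1, f α) = ∫ x in (0:ℝ)..1, f x := by
    rw [intervalIntegral.integral_of_le zero_le_one, integral_Icc_eq_integral_Ioc]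
  have hsplit : (∫ x in (0:ℝ)..1, f x)
      = ∑ b ∈ Finset.range m, ∫ x in ((b:ℝ)/m)..(((b:ℝ)+1)/m), f x := by
    have key := intervalIntegral.sum_integral_adjacent_intervals
      (a := fun k : ℕ => (k : ℝ) / m) (n := m) (fun k _ => hInt _ _)
    simp only [Nat.cast_zero, zero_div] at key
    rw [div_self hm0.ne'] at key
    rw [← key]
    apply Finset.sum_congr rfl
    intro b _
    congr 1
    push_cast
    ring
  have hper : ∀ b : ℕ, |f ((b:ℝ)/m) - m * ∫ x in ((b:ℝ)/m)..(((b:ℝ)+1)/m), f x|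
      ≤ K * ((1:ℝ)/m) ^ e := by
    intro b
    set a0 := (b:ℝ)/m with ha0
    set a1 := ((b:ℝ)+1)/m with ha1
    have hlen : a1 - a0 = 1/m := by rw [ha0, ha1]; field_simp; ring
    have hle : a0 ≤ a1 := by rw [← sub_nonneg, hlen]; positivity
    have hconst : f a0 = m * ∫ _x in a0..a1, f a0 := by
      rw [intervalIntegral.integral_const, hlen, smul_eq_mul]
      field_simp
    have hdiff : f a0 - m * (∫ x in a0..a1, f x)
        = m * ∫ x in a0..a1, (f a0 - f x) := by
      rw [intervalIntegral.integral_sub (intervalIntegrable_const (c := f a0)) (hInt a0 a1),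
        mul_sub, ← hconst]
    rw [hdiff, abs_mul, abs_of_pos hm0]
    have hbound : ‖∫ x in a0..a1, (f a0 - f x)‖ ≤ (K * ((1:ℝ)/m) ^ e) * |a1 - a0| := by
      apply intervalIntegral.norm_integral_le_of_norm_le_const
      intro x hx
      rw [Set.uIoc_of_le hle] at hx
      have hxd : |a0 - x| ≤ 1/m := by
        rw [abs_of_nonpos (by linarith [hx.1.le])]
        have := hx.2
        rw [← hlen]
        linarith [hx.1.le, hx.2]
      calc ‖f a0 - f x‖ ≤ K * |a0 - x| ^ e := hlip a0 x
        _ ≤ K * ((1:ℝ)/m) ^ e := by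
            apply mul_le_mul_of_nonneg_left _ hK
            exact Real.rpow_le_rpow (abs_nonneg _) hxd he0.le
    rw [Real.norm_eq_abs] at hbound
    calc (m:ℝ) * |∫ x in a0..a1, (f a0 - f x)| ≤ m * ((K * ((1:ℝ)/m) ^ e) * |a1 - a0|) := by
          exact mul_le_mul_of_nonneg_left hbound hm0.le
      _ = K * ((1:ℝ)/m) ^ e := by
          rw [hlen, abs_of_pos (by positivity)]
          field_simp
  calc |(∑ b ∈ Finset.range m, f (b / m)) - m * ∫ α in Set.Icc (0:ℝ) 1, f α|
      = |∑ b ∈ Finset.range m, (f ((b:ℝ)/m) - m * ∫ x in ((b:ℝ)/m)..(((b:ℝ)+1)/m), f x)| := by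
        rw [Finset.sum_sub_distrib, ← Finset.mul_sum, ← hsplit, ← h0]
    _ ≤ ∑ b ∈ Finset.range m, |f ((b:ℝ)/m) - m * ∫ x in ((b:ℝ)/m)..(((b:ℝ)+1)/m), f x| :=
        Finset.abs_sum_le_sum_abs _ _
    _ ≤ ∑ _b ∈ Finset.range m, K * ((1:ℝ)/m) ^ e := Finset.sum_le_sum (fun b _ => hper b)
    _ = m * (K * ((1:ℝ)/m) ^ e) := by rw [Finset.sum_const, Finset.card_range, nsmul_eq_mul]
    _ = K * (m : ℝ) ^ (1 - e) := by
        rw [Real.rpow_sub hm0, Real.rpow_one, one_div, Real.inv_rpow hm0.le]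
        field_simp
lemma core_bound (f : ℝ → ℝ) (hf : Continuous f) {K e : ℝ} (hK : 0 ≤ K) (he0 : 0 < e)
    (he1 : e ≤ 1) (hlip : ∀ x y : ℝ, |f x - f y| ≤ K * |x - y| ^ e) (q : ℕ) (hq : 0 < q) :
    |(1 / (Nat.totient q : ℝ)) *
        (∑ a' ∈ (Finset.range q).filter (fun a' => Nat.Coprime a' q), f ((a' : ℝ) / q)) -
      ∫ α in Set.Icc (0:ℝ) 1, f α|
      ≤ 4 ^ q.primeFactors.card * K * (q : ℝ) ^ (-e) := by
  have hq0 : (0:ℝ) < q := by exact_mod_cast hq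
  have hφ : 0 < Nat.totient q := Nat.totient_pos.2 hq
  have hφ0 : (0:ℝ) < (Nat.totient q : ℝ) := by exact_mod_cast hφ
  set I₀ := ∫ α in Set.Icc (0:ℝ) 1, f α with hI₀
  set g : ℕ → ℝ := fun a' => f ((a' : ℝ) / q) - I₀ with hg
  have hcard : ((Finset.range q).filter (fun a' => Nat.Coprime a' q)).card = Nat.totient q := by
    rw [Nat.totient_eq_card_coprime]
    congr 1
    apply Finset.filter_congr
    intro x _
    simp [Nat.coprime_comm, Nat.Coprime]
  have hmain : (1 / (Nat.totient q : ℝ)) *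
      (∑ a' ∈ (Finset.range q).filter (fun a' => Nat.Coprime a' q), f ((a' : ℝ) / q)) - I₀
      = (1 / (Nat.totient q : ℝ)) *
        ∑ a' ∈ (Finset.range q).filter (fun a' => Nat.Coprime a' q), g a' := by
    rw [hg]
    rw [Finset.sum_sub_distrib, Finset.sum_const, hcard, nsmul_eq_mul]
    field_simp
  rw [hmain]
  -- bound the moebius-decomposed sum
  have hinner : ∀ d ∈ q.divisors, |∑ b ∈ Finset.range (q / d), g (d * b)|
      ≤ K * ((q:ℝ)) ^ (1 - e) := by
    intro d hd
    rcases Nat.mem_divisors.mp hd with ⟨hdq, _⟩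
    have hd0 : 0 < d := Nat.pos_of_dvd_of_pos hdq hq
    set m := q / d with hm
    have hm1 : 1 ≤ m := Nat.div_pos (Nat.le_of_dvd hq hdq) hd0
    have hm0 : (0:ℝ) < m := by exact_mod_cast hm1
    have hdm : d * m = q := Nat.mul_div_cancel' hdq
    have hgb : ∀ b : ℕ, g (d * b) = f ((b:ℝ) / m) - I₀ := by
      intro b
      have hd0' : (0:ℝ) < d := by exact_mod_cast hd0
      have harg : ((d * b : ℕ) : ℝ) / (q : ℝ) = (b : ℝ) / m := by
        rw [← hdm]
        push_cast
        exact mul_div_mul_left _ _ (ne_of_gt hd0')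
      rw [hg]
      simp only [harg]
    have : ∑ b ∈ Finset.range m, g (d * b) = (∑ b ∈ Finset.range m, f ((b:ℝ) / m)) - m * I₀ := by
      rw [Finset.sum_congr rfl (fun b _ => hgb b), Finset.sum_sub_distrib, Finset.sum_const,
        Finset.card_range, nsmul_eq_mul]
    rw [this]
    calc |(∑ b ∈ Finset.range m, f ((b:ℝ) / m)) - m * I₀| ≤ K * (m:ℝ) ^ (1 - e) :=
          riemann_sum_bound hf hK he0 he1 hlip m hm1
      _ ≤ K * (q:ℝ) ^ (1 - e) := by
          apply mul_le_mul_of_nonneg_left _ hK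
          apply Real.rpow_le_rpow hm0.le _ (by linarith)
          exact_mod_cast Nat.div_le_self q d
  have hdecomp : |∑ a' ∈ (Finset.range q).filter (fun a' => Nat.Coprime a' q), g a'|
      ≤ 2 ^ q.primeFactors.card * (K * (q:ℝ) ^ (1 - e)) := by
    rw [moebius_decomp q hq g]
    calc |∑ d ∈ q.divisors, (μ d : ℝ) * ∑ b ∈ Finset.range (q / d), g (d * b)|
        ≤ ∑ d ∈ q.divisors, |(μ d : ℝ) * ∑ b ∈ Finset.range (q / d), g (d * b)| :=
          Finset.abs_sum_le_sum_abs _ _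
      _ = ∑ d ∈ q.divisors, |(μ d : ℝ)| * |∑ b ∈ Finset.range (q / d), g (d * b)| := by
          simp [abs_mul]
      _ ≤ ∑ d ∈ q.divisors, |(μ d : ℝ)| * (K * (q:ℝ) ^ (1 - e)) := by
          apply Finset.sum_le_sum
          intro d hd
          exact mul_le_mul_of_nonneg_left (hinner d hd) (abs_nonneg _)
      _ = (∑ d ∈ q.divisors, |(μ d : ℝ)|) * (K * (q:ℝ) ^ (1 - e)) := by
          rw [Finset.sum_mul]
      _ ≤ 2 ^ q.primeFactors.card * (K * (q:ℝ) ^ (1 - e)) := by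
          apply mul_le_mul_of_nonneg_right (sum_abs_moebius_le hq.ne')
          positivity
  calc |(1 / (Nat.totient q : ℝ)) *
        ∑ a' ∈ (Finset.range q).filter (fun a' => Nat.Coprime a' q), g a'|
      = (1 / (Nat.totient q : ℝ)) *
        |∑ a' ∈ (Finset.range q).filter (fun a' => Nat.Coprime a' q), g a'| := by
        rw [abs_mul, abs_of_pos (by positivity)]
    _ ≤ (2 ^ q.primeFactors.card / (q:ℝ)) *
        (2 ^ q.primeFactors.card * (K * (q:ℝ) ^ (1 - e))) := by
        apply mul_le_mul _ hdecomp (abs_nonneg _) (by positivity)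
        rw [div_le_div_iff₀ hφ0 hq0]
        have := le_pow_omega_mul_totient hq.ne'
        calc (1:ℝ) * q = q := one_mul _
          _ ≤ 2 ^ q.primeFactors.card * Nat.totient q := by exact_mod_cast this
          _ = 2 ^ q.primeFactors.card * Nat.totient q := rfl
    _ = 4 ^ q.primeFactors.card * K * (q : ℝ) ^ (-e) := by
        have h4 : (4:ℝ) ^ q.primeFactors.card
            = 2 ^ q.primeFactors.card * 2 ^ q.primeFactors.card := by
          rw [← mul_pow]; norm_num
        have hq1 : (q:ℝ) ^ (1 - e) = q * (q:ℝ) ^ (-e) := by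
          rw [show (1 : ℝ) - e = 1 + (-e) by ring, Real.rpow_add hq0, Real.rpow_one]
        rw [h4, hq1]
        field_simp
open MeasureTheory in
theorem stmt_11 (s : ℝ) (hs0 : 0 < s) (hs2 : s < 2) :
    ∃ C > 0, ∀ (Y q : ℕ) (a : ℕ → ℂ), 1 ≤ Y → Y ^ 10 ≤ q →
      (∀ n, a n ≠ 0 → 1 ≤ n ∧ n ≤ Y) →
      (∀ n, ‖a n‖ ≤ (n : ℝ) ^ ((1 : ℝ) / 10)) →
      |(1 / (Nat.totient q : ℝ)) *
          ∑ a' ∈ (Finset.range q).filter (fun a' => Nat.Coprime a' q),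
            ‖(((Y : ℝ) ^ (-(1 : ℝ) / 2) : ℝ) : ℂ) *
              ∑ n ∈ Finset.Icc 1 Y, a n *
                Complex.exp (2 * Real.pi * Complex.I * ((a' : ℂ) * n / (q : ℂ)))‖ ^ s -
        ∫ α in Set.Icc (0 : ℝ) 1,
            ‖(((Y : ℝ) ^ (-(1 : ℝ) / 2) : ℝ) : ℂ) *
              ∑ n ∈ Finset.Icc 1 Y, a n *
                Complex.exp (2 * Real.pi * Complex.I * (n * (α : ℂ)))‖ ^ s| ≤
        C * (Y : ℝ) ^ (-s) := by
  have hu0 : 0 < s / 2 := by linarith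
  have hu1 : s / 2 ≤ 1 := by linarith
  refine ⟨26 * (Real.exp ((4:ℝ) ^ ((4:ℝ)/s))) ^ (s/4), by positivity, ?_⟩
  intro Y q a hY hq hsupp habs
  have hY0 : (0:ℝ) < (Y:ℝ) := by exact_mod_cast hY
  have hY1 : (1:ℝ) ≤ (Y:ℝ) := by exact_mod_cast hY
  have hq0 : 0 < q := lt_of_lt_of_le (Nat.pow_pos hY) hq
  have hq0' : (0:ℝ) < (q:ℝ) := by exact_mod_cast hq0
  set M : ℝ := (Y:ℝ) ^ ((3:ℝ)/5) with hM
  set L : ℝ := 13 * (Y:ℝ) ^ ((8:ℝ)/5) with hL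
  set K : ℝ := 2 * M ^ (s/2) * L ^ (s/2) with hK
  set F : ℝ → ℂ := fun α : ℝ => (((Y : ℝ) ^ (-(1 : ℝ) / 2) : ℝ) : ℂ) *
      ∑ n ∈ Finset.Icc 1 Y, a n * Complex.exp (2 * Real.pi * Complex.I * (n * (α : ℂ)))
    with hF
  set f : ℝ → ℝ := fun α : ℝ => ‖F α‖ ^ s with hf
  -- goal should now mention f
  have hMpos : 0 < M := by rw [hM]; positivity
  have hLpos : 0 < L := by rw [hL]; positivity
  have hKpos : 0 < K := by rw [hK]; positivity
  have hcabs : ‖(((Y : ℝ) ^ (-(1:ℝ)/2) : ℝ) : ℂ)‖ = (Y:ℝ) ^ (-(1:ℝ)/2) := by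
    rw [Complex.norm_real, Real.norm_eq_abs, abs_of_pos (by positivity)]
  have hargI : ∀ (n : ℕ) (α : ℝ), 2 * (Real.pi : ℂ) * Complex.I * ((n:ℂ) * (α:ℂ))
      = ((2 * Real.pi * n * α : ℝ) : ℂ) * Complex.I := by
    intro n α
    push_cast
    ring
  have hFM : ∀ α : ℝ, ‖F α‖ ≤ M := by
    intro α
    simp only [hF]
    rw [norm_mul, hcabs]
    have hterm : ∀ n ∈ Finset.Icc 1 Y,
        ‖a n * Complex.exp (2 * Real.pi * Complex.I * ((n:ℂ) * (α:ℂ)))‖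
          ≤ (Y:ℝ) ^ ((1:ℝ)/10) := by
      intro n hn
      rw [norm_mul]
      have hexp : ‖Complex.exp (2 * Real.pi * Complex.I * ((n:ℂ) * (α:ℂ)))‖ = 1 := by
        rw [hargI n α]
        exact Complex.norm_exp_ofReal_mul_I _
      rw [hexp, mul_one]
      calc ‖a n‖ ≤ (n:ℝ) ^ ((1:ℝ)/10) := habs n
        _ ≤ (Y:ℝ) ^ ((1:ℝ)/10) := by
            apply Real.rpow_le_rpow (n.cast_nonneg) _ (by norm_num)
            exact_mod_cast (Finset.mem_Icc.mp hn).2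
    calc (Y:ℝ) ^ (-(1:ℝ)/2) * ‖∑ n ∈ Finset.Icc 1 Y,
          a n * Complex.exp (2 * Real.pi * Complex.I * ((n:ℂ) * (α:ℂ)))‖
        ≤ (Y:ℝ) ^ (-(1:ℝ)/2) * ((Y:ℝ) * (Y:ℝ) ^ ((1:ℝ)/10)) := by
          apply mul_le_mul_of_nonneg_left _ (by positivity)
          calc ‖∑ n ∈ Finset.Icc 1 Y,
                a n * Complex.exp (2 * Real.pi * Complex.I * ((n:ℂ) * (α:ℂ)))‖
              ≤ ∑ n ∈ Finset.Icc 1 Y, 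
                  ‖a n * Complex.exp (2 * Real.pi * Complex.I * ((n:ℂ) * (α:ℂ)))‖ :=
                norm_sum_le _ _
            _ ≤ ∑ _n ∈ Finset.Icc 1 Y, (Y:ℝ) ^ ((1:ℝ)/10) := Finset.sum_le_sum hterm
            _ = (Y:ℝ) * (Y:ℝ) ^ ((1:ℝ)/10) := by
                rw [Finset.sum_const, Nat.card_Icc, nsmul_eq_mul]
                norm_num
      _ = M := by
          rw [hM]
          have h1 : (Y:ℝ) * (Y:ℝ) ^ ((1:ℝ)/10) = (Y:ℝ) ^ (1 + (1:ℝ)/10) := by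
            rw [Real.rpow_add hY0, Real.rpow_one]
          rw [h1, ← Real.rpow_add hY0]
          norm_num
  have hFlip : ∀ x y : ℝ, ‖F x - F y‖ ≤ L * |x - y| := by
    intro x y
    simp only [hF]
    rw [← mul_sub, norm_mul, hcabs, ← Finset.sum_sub_distrib]
    have hterm : ∀ n ∈ Finset.Icc 1 Y,
        ‖a n * Complex.exp (2 * Real.pi * Complex.I * ((n:ℂ) * (x:ℂ)))
          - a n * Complex.exp (2 * Real.pi * Complex.I * ((n:ℂ) * (y:ℂ)))‖
          ≤ (Y:ℝ) ^ ((1:ℝ)/10) * (4 * Real.pi * Y * |x - y|) := by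
      intro n hn
      have hnY : (n:ℝ) ≤ (Y:ℝ) := by exact_mod_cast (Finset.mem_Icc.mp hn).2
      have hn0 : (0:ℝ) ≤ (n:ℝ) := n.cast_nonneg
      rw [← mul_sub, norm_mul]
      have hexp : ‖Complex.exp (2 * Real.pi * Complex.I * ((n:ℂ) * (x:ℂ)))
          - Complex.exp (2 * Real.pi * Complex.I * ((n:ℂ) * (y:ℂ)))‖
          ≤ 4 * Real.pi * Y * |x - y| := by
        rw [hargI n x, hargI n y]
        calc ‖Complex.exp (((2 * Real.pi * n * x : ℝ) : ℂ) * Complex.I)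
              - Complex.exp (((2 * Real.pi * n * y : ℝ) : ℂ) * Complex.I)‖
            ≤ 2 * |2 * Real.pi * n * x - 2 * Real.pi * n * y| := expI_lip _ _
          _ = 4 * Real.pi * n * |x - y| := by
              rw [show 2 * Real.pi * n * x - 2 * Real.pi * n * y
                  = (2 * Real.pi * n) * (x - y) by ring, abs_mul,
                abs_of_nonneg (by positivity : (0:ℝ) ≤ 2 * Real.pi * n)]
              ring
          _ ≤ 4 * Real.pi * Y * |x - y| := by
              apply mul_le_mul_of_nonneg_right _ (abs_nonneg _)
              have := Real.pi_pos
              nlinarith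
      calc ‖a n‖ * ‖Complex.exp (2 * Real.pi * Complex.I * ((n:ℂ) * (x:ℂ)))
            - Complex.exp (2 * Real.pi * Complex.I * ((n:ℂ) * (y:ℂ)))‖
          ≤ (n:ℝ) ^ ((1:ℝ)/10) * (4 * Real.pi * Y * |x - y|) := by
            apply mul_le_mul (habs n) hexp (norm_nonneg _) (by positivity)
        _ ≤ (Y:ℝ) ^ ((1:ℝ)/10) * (4 * Real.pi * Y * |x - y|) := by
            apply mul_le_mul_of_nonneg_right _ (by positivity)
            exact Real.rpow_le_rpow hn0 hnY (by norm_num)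
    calc (Y:ℝ) ^ (-(1:ℝ)/2) * ‖∑ n ∈ Finset.Icc 1 Y,
          (a n * Complex.exp (2 * Real.pi * Complex.I * ((n:ℂ) * (x:ℂ)))
            - a n * Complex.exp (2 * Real.pi * Complex.I * ((n:ℂ) * (y:ℂ))))‖
        ≤ (Y:ℝ) ^ (-(1:ℝ)/2) * ((Y:ℝ) * ((Y:ℝ) ^ ((1:ℝ)/10) * (4 * Real.pi * Y * |x - y|))) := by
          apply mul_le_mul_of_nonneg_left _ (by positivity)
          calc ‖∑ n ∈ Finset.Icc 1 Y,
                (a n * Complex.exp (2 * Real.pi * Complex.I * ((n:ℂ) * (x:ℂ)))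
                  - a n * Complex.exp (2 * Real.pi * Complex.I * ((n:ℂ) * (y:ℂ))))‖
              ≤ ∑ n ∈ Finset.Icc 1 Y, 
                  ‖a n * Complex.exp (2 * Real.pi * Complex.I * ((n:ℂ) * (x:ℂ)))
                    - a n * Complex.exp (2 * Real.pi * Complex.I * ((n:ℂ) * (y:ℂ)))‖ :=
                norm_sum_le _ _
            _ ≤ ∑ _n ∈ Finset.Icc 1 Y, (Y:ℝ) ^ ((1:ℝ)/10) * (4 * Real.pi * Y * |x - y|) :=
                Finset.sum_le_sum hterm
            _ = (Y:ℝ) * ((Y:ℝ) ^ ((1:ℝ)/10) * (4 * Real.pi * Y * |x - y|)) := by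
                rw [Finset.sum_const, Nat.card_Icc, nsmul_eq_mul]
                norm_num
      _ ≤ L * |x - y| := by
          rw [hL]
          have hpi : Real.pi ≤ 3.25 := by linarith [Real.pi_lt_d2]
          have hrw : (Y:ℝ) ^ (-(1:ℝ)/2) * ((Y:ℝ) * ((Y:ℝ) ^ ((1:ℝ)/10) * (4 * Real.pi * Y * |x - y|)))
              = (4 * Real.pi) * ((Y:ℝ) ^ (-(1:ℝ)/2) * ((Y:ℝ)^(1:ℝ) * ((Y:ℝ) ^ ((1:ℝ)/10) * (Y:ℝ)^(1:ℝ)))) * |x - y| := by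
            rw [Real.rpow_one]
            ring
          rw [hrw]
          have hYpow : (Y:ℝ) ^ (-(1:ℝ)/2) * ((Y:ℝ)^(1:ℝ) * ((Y:ℝ) ^ ((1:ℝ)/10) * (Y:ℝ)^(1:ℝ)))
              = (Y:ℝ) ^ ((8:ℝ)/5) := by
            rw [← Real.rpow_add hY0, ← Real.rpow_add hY0, ← Real.rpow_add hY0]
            norm_num
          rw [hYpow]
          apply mul_le_mul_of_nonneg_right _ (abs_nonneg _)
          have hYr : (0:ℝ) ≤ (Y:ℝ) ^ ((8:ℝ)/5) := by positivity
          nlinarith [Real.pi_pos]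
  have hcont : Continuous f := by
    rw [hf]
    have hFc : Continuous F := by
      rw [hF]
      apply continuous_const.mul
      apply continuous_finset_sum
      intro n _
      apply continuous_const.mul
      apply Complex.continuous_exp.comp
      exact continuous_const.mul (continuous_const.mul Complex.continuous_ofReal)
    apply Continuous.rpow_const (continuous_norm.comp hFc)
    intro x
    exact Or.inr hs0.le
  have hlip : ∀ x y : ℝ, |f x - f y| ≤ K * |x - y| ^ (s/2) := by
    intro x y
    simp only [hf]
    have h1 := abs_rpow2_sub_rpow2 hu0 hu1 (norm_nonneg (F x)) (norm_nonneg (F y))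
      (hFM x) (hFM y)
    rw [show 2 * (s/2) = s by ring] at h1
    refine h1.trans ?_
    rw [hK]
    have h2 : |‖F x‖ - ‖F y‖| ^ (s/2)
        ≤ L ^ (s/2) * |x - y| ^ (s/2) := by
      calc |‖F x‖ - ‖F y‖| ^ (s/2)
          ≤ (L * |x - y|) ^ (s/2) := by
            apply Real.rpow_le_rpow (abs_nonneg _) _ hu0.le
            calc |‖F x‖ - ‖F y‖| ≤ ‖F x - F y‖ :=
                  abs_norm_sub_norm_le _ _
              _ ≤ L * |x - y| := hFlip x y
        _ = L ^ (s/2) * |x - y| ^ (s/2) := Real.mul_rpow hLpos.le (abs_nonneg _)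
    calc 2 * M ^ (s/2) * |‖F x‖ - ‖F y‖| ^ (s/2)
        ≤ 2 * M ^ (s/2) * (L ^ (s/2) * |x - y| ^ (s/2)) := by
          apply mul_le_mul_of_nonneg_left h2 (by positivity)
      _ = 2 * M ^ (s/2) * L ^ (s/2) * |x - y| ^ (s/2) := by ring
  have key := core_bound f hcont hKpos.le hu0 hu1 hlip q hq0
  have hsum_eq : ∑ a' ∈ (Finset.range q).filter (fun a' => Nat.Coprime a' q),
      ‖(((Y : ℝ) ^ (-(1 : ℝ) / 2) : ℝ) : ℂ) *
        ∑ n ∈ Finset.Icc 1 Y, a n *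
          Complex.exp (2 * Real.pi * Complex.I * ((a' : ℂ) * n / (q : ℂ)))‖ ^ s
      = ∑ a' ∈ (Finset.range q).filter (fun a' => Nat.Coprime a' q), f ((a' : ℝ) / q) := by
    apply Finset.sum_congr rfl
    intro a' _
    have harg : ∀ n : ℕ, 2 * (Real.pi : ℂ) * Complex.I * ((a' : ℂ) * n / (q : ℂ))
        = 2 * (Real.pi : ℂ) * Complex.I * ((n : ℂ) * (((a' : ℝ) / q : ℝ) : ℂ)) := by
      intro n
      push_cast
      ring
    rw [hf]
    simp only [hF, harg]
  rw [hsum_eq]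
  refine key.trans ?_
  -- numeric chain
  set w := q.primeFactors.card with hw
  set A : ℝ := (4:ℝ) ^ ((4:ℝ)/s) with hA
  have hA0 : (0:ℝ) < A := by rw [hA]; positivity
  have hAε : A ^ (s/4) = 4 := by
    rw [hA, ← Real.rpow_mul (by norm_num : (0:ℝ) ≤ 4),
      show (4:ℝ)/s * (s/4) = 1 by field_simp, Real.rpow_one]
  have hfact : ((Nat.factorial w : ℕ) : ℝ) ≤ (q:ℝ) := by
    exact_mod_cast omega_factorial_le hq0.ne'
  have hAw : A ^ (w:ℕ) ≤ Real.exp A * q := by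
    have h := Real.pow_div_factorial_le_exp (x := A) hA0.le w
    have hfac0 : (0:ℝ) < ((Nat.factorial w : ℕ) : ℝ) := by
      exact_mod_cast Nat.factorial_pos w
    rw [div_le_iff₀ hfac0] at h
    calc A ^ (w:ℕ) ≤ Real.exp A * ((Nat.factorial w : ℕ) : ℝ) := by
          exact h
      _ ≤ Real.exp A * q := mul_le_mul_of_nonneg_left hfact (Real.exp_pos A).le
  have h4ω : (4:ℝ) ^ w ≤ (Real.exp A) ^ (s/4) * (q:ℝ) ^ (s/4) := by
    calc (4:ℝ) ^ w = (A ^ (s/4)) ^ w := by rw [hAε]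
      _ = (A ^ (w:ℕ)) ^ (s/4) := by
          rw [← Real.rpow_natCast (A ^ (s/4)) w, ← Real.rpow_natCast A w,
            ← Real.rpow_mul hA0.le, ← Real.rpow_mul hA0.le, mul_comm]
      _ ≤ (Real.exp A * q) ^ (s/4) := Real.rpow_le_rpow (by positivity) hAw (by linarith)
      _ = (Real.exp A) ^ (s/4) * (q:ℝ) ^ (s/4) := Real.mul_rpow (Real.exp_pos A).le hq0'.le
  have hKle : K ≤ 26 * (Y:ℝ) ^ ((11:ℝ)/5 * (s/2)) := by
    rw [hK, hM, hL]
    have h13 : (13 * (Y:ℝ) ^ ((8:ℝ)/5)) ^ (s/2)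
        = (13:ℝ) ^ (s/2) * ((Y:ℝ) ^ ((8:ℝ)/5)) ^ (s/2) :=
      Real.mul_rpow (by norm_num) (by positivity)
    have h13le : (13:ℝ) ^ (s/2) ≤ 13 := by
      nth_rewrite 2 [← Real.rpow_one (13:ℝ)]
      exact Real.rpow_le_rpow_of_exponent_le (by norm_num) hu1
    rw [h13, ← Real.rpow_mul hY0.le, ← Real.rpow_mul hY0.le]
    calc 2 * (Y:ℝ) ^ ((3:ℝ)/5 * (s/2)) * ((13:ℝ) ^ (s/2) * (Y:ℝ) ^ ((8:ℝ)/5 * (s/2)))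
        ≤ 2 * (Y:ℝ) ^ ((3:ℝ)/5 * (s/2)) * (13 * (Y:ℝ) ^ ((8:ℝ)/5 * (s/2))) := by
          apply mul_le_mul_of_nonneg_left _ (by positivity)
          apply mul_le_mul_of_nonneg_right h13le (by positivity)
      _ = 26 * ((Y:ℝ) ^ ((3:ℝ)/5 * (s/2)) * (Y:ℝ) ^ ((8:ℝ)/5 * (s/2))) := by ring
      _ = 26 * (Y:ℝ) ^ ((11:ℝ)/5 * (s/2)) := by
          rw [← Real.rpow_add hY0]
          congr 1
          ring
  have hqY : (q:ℝ) ^ (-(s/4)) ≤ (Y:ℝ) ^ (-(5:ℝ)/2 * s) := by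
    have hYq : ((Y:ℝ) ^ (10:ℕ)) ≤ (q:ℝ) := by exact_mod_cast hq
    have hYpow : (0:ℝ) < (Y:ℝ) ^ (10:ℕ) := by positivity
    calc (q:ℝ) ^ (-(s/4)) ≤ ((Y:ℝ) ^ (10:ℕ)) ^ (-(s/4)) :=
          Real.rpow_le_rpow_of_nonpos hYpow hYq (by linarith)
      _ = (Y:ℝ) ^ (-(5:ℝ)/2 * s) := by
          rw [← Real.rpow_natCast (Y:ℝ) 10, ← Real.rpow_mul hY0.le]
          congr 1
          push_cast
          ring
  calc (4:ℝ) ^ w * K * (q:ℝ) ^ (-(s/2))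
      ≤ ((Real.exp A) ^ (s/4) * (q:ℝ) ^ (s/4)) * (26 * (Y:ℝ) ^ ((11:ℝ)/5 * (s/2)))
        * (q:ℝ) ^ (-(s/2)) := by
        apply mul_le_mul_of_nonneg_right _ (by positivity)
        apply mul_le_mul h4ω hKle hKpos.le (by positivity)
    _ = 26 * (Real.exp A) ^ (s/4) * (Y:ℝ) ^ ((11:ℝ)/5 * (s/2))
        * ((q:ℝ) ^ (s/4) * (q:ℝ) ^ (-(s/2))) := by ring
    _ = 26 * (Real.exp A) ^ (s/4) * (Y:ℝ) ^ ((11:ℝ)/5 * (s/2)) * (q:ℝ) ^ (-(s/4)) := by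
        rw [← Real.rpow_add hq0']
        congr 1
        ring
    _ ≤ 26 * (Real.exp A) ^ (s/4) * (Y:ℝ) ^ ((11:ℝ)/5 * (s/2)) * (Y:ℝ) ^ (-(5:ℝ)/2 * s) := by
        apply mul_le_mul_of_nonneg_left hqY (by positivity)
    _ = 26 * (Real.exp A) ^ (s/4) * (Y:ℝ) ^ ((11:ℝ)/5 * (s/2) + -(5:ℝ)/2 * s) := by
        rw [mul_assoc, ← Real.rpow_add hY0]
    _ ≤ 26 * (Real.exp A) ^ (s/4) * (Y:ℝ) ^ (-s) := by
        apply mul_le_mul_of_nonneg_left _ (by positivity)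
        apply Real.rpow_le_rpow_of_exponent_le hY1
        linarith
    _ = 26 * (Real.exp ((4:ℝ) ^ ((4:ℝ)/s))) ^ (s/4) * (Y:ℝ) ^ (-s) := by rw [hA]
end
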